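/- For Re(β) > 0 and Re(γ) > 0, ∫₀^∞ y^{ν−1} e^{−β/y − γy} dy = 2 (β/γ)^{ν/2} K_ν(2√(βγ)), where K_ν is the modified Bessel function of the second kind. -/

import Mathlib

open Real MeasureTheory Set

/-- Modified Bessel function of the second kind (via the cosh integral representation,
valid for `Re(x) > 0` and all complex orders `ν`). -/
noncomputable def besselK (ν x : ℂ) : ℂ :=
  ∫ t in Ioi (0:ℝ), Complex.exp (-x * Real.cosh t) * Complex.cosh (ν * t)

namespace BesselAux

open Complex Filter Asymptotics

/-- Core integrability: `exp (A t - B e^t)` on `Ioi 0`. -/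
lemma intE (A : ℝ) {B : ℝ} (hB : 0 < B) :
    IntegrableOn (fun t : ℝ => Real.exp (A * t - B * Real.exp t)) (Ioi (0:ℝ)) := by
  apply integrable_of_isBigO_exp_neg (b := 1) one_pos
  · exact (Real.continuous_exp.comp (by fun_prop)).continuousOn
  · have h0 : Tendsto (fun u : ℝ => u ^ (A + 1) * Real.exp (-B * u)) atTop (nhds 0) :=
      tendsto_rpow_mul_exp_neg_mul_atTop_nhds_zero _ B hB
    have h1 := h0.comp Real.tendsto_exp_atTop
    have key : ∀ t : ℝ, Real.exp t ^ (A + 1) * Real.exp (-B * Real.exp t)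
        = Real.exp (A * t - B * Real.exp t) / Real.exp (-1 * t) := by
      intro t
      rw [← Real.exp_mul, ← Real.exp_add, ← Real.exp_sub]
      congr 1
      ring
    have h2 : Tendsto (fun t : ℝ => Real.exp (A * t - B * Real.exp t) / Real.exp (-1 * t))
        atTop (nhds 0) := by
      refine Tendsto.congr (fun t => key t) h1
    exact (Asymptotics.isLittleO_of_tendsto
      (fun x hx => absurd hx (Real.exp_ne_zero _)) h2).isBigO

lemma intOn_neg {E : Type*} [NormedAddCommGroup E] (f : ℝ → E) :
    IntegrableOn (fun t => f (-t)) (Ioi (0:ℝ)) ↔ IntegrableOn f (Iio 0) := by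
  have A : MeasurableEmbedding (fun x : ℝ => -x) :=
    (Homeomorph.neg ℝ).isClosedEmbedding.measurableEmbedding
  have hmap : Measure.map (fun x : ℝ => -x) (volume.restrict (Ioi 0))
      = volume.restrict (Iio 0) := by
    have h1 : ((fun x : ℝ => -x) ⁻¹' (Iio 0)) = Ioi 0 := by ext x; simp
    rw [show volume.restrict (Ioi (0:ℝ)) = volume.restrict ((fun x : ℝ => -x) ⁻¹' (Iio 0)) by
        rw [h1],
      ← Measure.restrict_map measurable_neg measurableSet_Iio, Measure.map_neg_eq_self]
  rw [IntegrableOn, IntegrableOn, ← hmap, A.integrable_map_iff]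
  rfl

/-- Integrability over `ℝ` of `exp (a x - u e^{-x} - v e^x)`. -/
lemma intW (a : ℝ) {u v : ℝ} (hu : 0 < u) (hv : 0 < v) :
    Integrable (fun x : ℝ => Real.exp (a * x - u * Real.exp (-x) - v * Real.exp x)) := by
  set f : ℝ → ℝ := fun x => Real.exp (a * x - u * Real.exp (-x) - v * Real.exp x) with hf
  have hcont : Continuous f := by fun_prop
  have h1 : IntegrableOn f (Ioi 0) := by
    refine (intE a hv).mono' hcont.aestronglyMeasurable ?_
    filter_upwards with t
    rw [Real.norm_eq_abs, abs_of_pos (Real.exp_pos _)]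
    apply Real.exp_le_exp.2
    have := Real.exp_pos (-t)
    nlinarith
  have h2 : IntegrableOn f (Iio 0) := by
    have h3 : IntegrableOn (fun t : ℝ => f (-t)) (Ioi 0) := by
      refine (intE (-a) hu).mono' (hcont.comp continuous_neg).aestronglyMeasurable ?_
      filter_upwards with t
      rw [Real.norm_eq_abs, abs_of_pos (Real.exp_pos _)]
      apply Real.exp_le_exp.2
      have := Real.exp_pos (-t)
      simp only [hf, neg_neg]
      nlinarith
    exact (intOn_neg f).1 h3
  have hae : (Iio (0:ℝ) ∪ Ioi 0 : Set ℝ) =ᵐ[volume] (univ : Set ℝ) := by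
    rw [Iio_union_Ioi, ae_eq_univ, compl_compl]
    exact measure_singleton 0
  have : IntegrableOn f (Iio 0 ∪ Ioi 0) := h2.union h1
  rw [← integrableOn_univ]
  exact this.congr_set_ae hae.symm

/-- The two-sided exponential-type integrand. -/
noncomputable def Jf (ν β γ : ℂ) (x : ℝ) : ℂ :=
  Complex.exp (ν * x - β * Real.exp (-x) - γ * Real.exp x)

lemma norm_Jf (ν β γ : ℂ) (x : ℝ) :
    ‖Jf ν β γ x‖ = Real.exp (ν.re * x - β.re * Real.exp (-x) - γ.re * Real.exp x) := by
  rw [Jf, Complex.norm_exp]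
  congr 1
  simp [Complex.sub_re, Complex.mul_re, -Complex.ofReal_exp]

lemma intJf (ν β γ : ℂ) (hβ : 0 < β.re) (hγ : 0 < γ.re) :
    Integrable (Jf ν β γ) := by
  refine (intW ν.re hβ hγ).mono' ?_ ?_
  · apply Continuous.aestronglyMeasurable
    unfold Jf
    fun_prop
  · filter_upwards with x
    rw [norm_Jf]

noncomputable def J (ν β γ : ℂ) : ℂ := ∫ x : ℝ, Jf ν β γ x

/-- Change of variables `y = e^x`. -/
lemma lhs_eq_J (ν β γ : ℂ) :
    (∫ y in Ioi (0:ℝ), (y:ℂ)^(ν-1) * Complex.exp (-β/(y:ℂ) - γ*(y:ℂ))) = J ν β γ := by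
  have h := integral_image_eq_integral_abs_deriv_smul MeasurableSet.univ
    (f := Real.exp) (f' := Real.exp)
    (fun x _ => (Real.hasDerivAt_exp x).hasDerivWithinAt)
    (Real.exp_injective.injOn)
    (fun y : ℝ => (y:ℂ)^(ν-1) * Complex.exp (-β/(y:ℂ) - γ*(y:ℂ)))
  rw [image_univ, Real.range_exp] at h
  rw [h, Measure.restrict_univ]
  unfold J
  congr 1
  funext x
  have hex : ((Real.exp x : ℝ) : ℂ) = Complex.exp (x : ℂ) := by
    rw [Complex.ofReal_exp]
  have hne : Complex.exp (x:ℂ) ≠ 0 := Complex.exp_ne_zero _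
  have hpow : ((Real.exp x : ℝ) : ℂ) ^ (ν - 1) = Complex.exp ((x:ℂ) * (ν - 1)) := by
    rw [hex, Complex.cpow_def_of_ne_zero hne, Complex.log_exp (by simpa using Real.pi_pos)
      (by simp [Real.pi_pos.le])]
  have hdiv : -β / ((Real.exp x : ℝ) : ℂ) = -β * Complex.exp (-(x:ℂ)) := by
    rw [hex, Complex.exp_neg, div_eq_mul_inv]
  rw [_root_.abs_of_pos (Real.exp_pos x), Complex.real_smul, hpow]
  rw [show (-β / ((Real.exp x : ℝ):ℂ) - γ * ((Real.exp x:ℝ):ℂ))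
      = -β * Complex.exp (-(x:ℂ)) - γ * Complex.exp (x:ℂ) by rw [hdiv, hex]]
  rw [Jf, hex, ← Complex.exp_add, ← Complex.exp_add]
  congr 1
  rw [show ((Real.exp (-x) : ℝ) : ℂ) = Complex.exp (-(x:ℂ)) by
    rw [Complex.ofReal_exp, Complex.ofReal_neg]]
  ring

lemma norm_cosh_le (ν : ℂ) {t : ℝ} (ht : 0 ≤ t) :
    ‖Complex.cosh (ν * t)‖ ≤ Real.exp (‖ν‖ * t) := by
  have h1 : Complex.cosh (ν * t) = (Complex.exp (ν * t) + Complex.exp (-(ν * t))) / 2 := rfl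
  rw [h1]
  have h2 : ‖(Complex.exp (ν * t) + Complex.exp (-(ν * t))) / 2‖
      ≤ (‖Complex.exp (ν * t)‖ + ‖Complex.exp (-(ν * t))‖) / 2 := by
    rw [norm_div]
    rw [Complex.norm_two]
    gcongr
    exact norm_add_le _ _
  refine h2.trans ?_
  have hre : |(ν * (t:ℂ)).re| ≤ ‖ν‖ * t := by
    rw [Complex.mul_re]
    simp only [Complex.ofReal_re, Complex.ofReal_im, mul_zero, sub_zero]
    rw [abs_mul, _root_.abs_of_nonneg ht]
    gcongr
    exact Complex.abs_re_le_norm ν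
  have e1 : ‖Complex.exp (ν * t)‖ ≤ Real.exp (‖ν‖ * t) := by
    rw [Complex.norm_exp]
    exact Real.exp_le_exp.2 ((le_abs_self _).trans hre)
  have e2 : ‖Complex.exp (-(ν * t))‖ ≤ Real.exp (‖ν‖ * t) := by
    rw [Complex.norm_exp, Complex.neg_re]
    exact Real.exp_le_exp.2 ((neg_le_abs _).trans hre)
  linarith

/-- Integrability of the Bessel integrand. -/
lemma intK (ν x : ℂ) (hx : 0 < x.re) :
    IntegrableOn (fun t : ℝ => Complex.exp (-x * Real.cosh t) * Complex.cosh (ν * t))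
      (Ioi (0:ℝ)) := by
  refine (intE ‖ν‖ (B := x.re/2) (by linarith)).mono' ?_ ?_
  · apply Continuous.aestronglyMeasurable
    fun_prop
  · rw [ae_restrict_iff' measurableSet_Ioi]
    filter_upwards with t ht
    have ht' : (0:ℝ) ≤ t := le_of_lt ht
    rw [norm_mul]
    have h1 : ‖Complex.exp (-x * Real.cosh t)‖ = Real.exp (-x.re * Real.cosh t) := by
      rw [Complex.norm_exp]
      congr 1
      simp [Complex.mul_re]
    have h2 : Real.exp t / 2 ≤ Real.cosh t := by
      rw [Real.cosh_eq]
      have := Real.exp_pos (-t)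
      linarith
    calc ‖Complex.exp (-x * Real.cosh t)‖ * ‖Complex.cosh (ν * t)‖
        ≤ Real.exp (-x.re * Real.cosh t) * Real.exp (‖ν‖ * t) := by
          rw [h1]
          exact mul_le_mul_of_nonneg_left (norm_cosh_le ν ht') (Real.exp_pos _).le
      _ = Real.exp (‖ν‖ * t + -x.re * Real.cosh t) := by rw [← Real.exp_add]; ring_nf
      _ ≤ Real.exp (‖ν‖ * t - x.re/2 * Real.exp t) := by
          apply Real.exp_le_exp.2
          have : x.re/2 * Real.exp t ≤ x.re * Real.cosh t := by nlinarith
          linarith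

/-- The real-parameter case. -/
lemma real_case (ν : ℂ) {b c : ℝ} (hb : 0 < b) (hc : 0 < c) :
    J ν b c = 2 * ((b:ℂ)/(c:ℂ))^(ν/2 : ℂ) * besselK ν (2 * ((b:ℂ)*(c:ℂ))^((1:ℂ)/2)) := by
  set r : ℝ := Real.sqrt (b / c) with hrdef
  set p : ℝ := Real.sqrt (b * c) with hpdef
  have hr0 : 0 < r := Real.sqrt_pos.2 (div_pos hb hc)
  have hp0 : 0 < p := Real.sqrt_pos.2 (mul_pos hb hc)
  set L : ℝ := Real.log r with hLdef
  have heL : Real.exp L = r := Real.exp_log hr0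
  have hpr : p * r = b := by
    rw [hpdef, hrdef, ← Real.sqrt_mul (mul_pos hb hc).le,
      show b * c * (b / c) = b ^ 2 by field_simp]
    exact Real.sqrt_sq hb.le
  have hrr : r * r = b / c := Real.mul_self_sqrt (div_pos hb hc).le
  have hcr : c * r = p := by
    have h1 : (c * r) * r = p * r := by
      rw [mul_assoc, hrr, hpr]
      field_simp
    exact mul_right_cancel₀ hr0.ne' h1
  have hbr : b * r⁻¹ = p := by
    rw [← hpr, mul_inv_cancel_right₀ hr0.ne']
  have step1 : J ν b c = Complex.exp (ν * L) * ∫ t : ℝ, Jf ν p p t := by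
    unfold J
    rw [← integral_add_right_eq_self (fun x => Jf ν b c x) L, ← integral_const_mul]
    refine integral_congr_ae (Filter.Eventually.of_forall fun t => ?_)
    unfold Jf
    have eL : Real.exp (-L) = r⁻¹ := by rw [Real.exp_neg, heL]
    have e1 : Real.exp (-(t + L)) = Real.exp (-t) * r⁻¹ := by
      rw [show -(t+L) = -t + -L by ring, Real.exp_add, eL]
    have e2 : Real.exp (t + L) = Real.exp t * r := by
      rw [Real.exp_add, heL]
    simp only [e1, e2]
    rw [← Complex.exp_add]
    congr 1
    have f1 : ((b * r⁻¹ : ℝ) : ℂ) = ((p:ℝ):ℂ) := by rw [hbr]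
    have f2 : ((c * r : ℝ) : ℂ) = ((p:ℝ):ℂ) := by rw [hcr]
    push_cast at f1 f2 ⊢
    linear_combination (-(Complex.exp (-(t:ℂ)))) * f1 + (-(Complex.exp (t:ℂ))) * f2
  have hint : Integrable (Jf ν p p) := intJf ν p p (by simpa using hp0) (by simpa using hp0)
  have hint2 : IntegrableOn (fun t => Jf ν p p (-t)) (Ioi (0:ℝ)) :=
    (intOn_neg _).2 hint.integrableOn
  have step2 : (∫ t : ℝ, Jf ν p p t) = 2 * besselK ν (2 * (p:ℂ)) := by
    have hsplit : (∫ t : ℝ, Jf ν p p t)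
        = (∫ t in Iic (0:ℝ), Jf ν p p t) + ∫ t in Ioi 0, Jf ν p p t :=
      (intervalIntegral.integral_Iic_add_Ioi hint.integrableOn hint.integrableOn).symm
    have hrefl : (∫ t in Iic (0:ℝ), Jf ν p p t) = ∫ t in Ioi (0:ℝ), Jf ν p p (-t) := by
      rw [integral_comp_neg_Ioi]
      norm_num
    rw [hsplit, hrefl, ← integral_add hint2 hint.integrableOn]
    unfold besselK
    rw [← integral_const_mul]
    refine setIntegral_congr_fun measurableSet_Ioi fun t ht => ?_
    unfold Jf
    simp only [neg_neg, Complex.ofReal_neg]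
    rw [Real.cosh_eq, Complex.cosh]
    push_cast
    rw [show ν * -(t:ℂ) - (p:ℂ) * Complex.exp (t:ℂ) - (p:ℂ) * Complex.exp (-(t:ℂ))
        = -(ν * (t:ℂ)) + (-(p:ℂ) * Complex.exp (-(t:ℂ)) - (p:ℂ) * Complex.exp (t:ℂ)) by ring,
      show ν * (t:ℂ) - (p:ℂ) * Complex.exp (-(t:ℂ)) - (p:ℂ) * Complex.exp (t:ℂ)
        = ν * (t:ℂ) + (-(p:ℂ) * Complex.exp (-(t:ℂ)) - (p:ℂ) * Complex.exp (t:ℂ)) by ring,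
      show -(2 * (p:ℂ)) * ((Complex.exp (t:ℂ) + Complex.exp (-(t:ℂ))) / 2)
        = -(p:ℂ) * Complex.exp (-(t:ℂ)) - (p:ℂ) * Complex.exp (t:ℂ) by ring,
      Complex.exp_add, Complex.exp_add]
    ring
  have hsq : ((b:ℂ)*(c:ℂ))^((1:ℂ)/2) = (p:ℂ) := by
    rw [← Complex.ofReal_mul, show ((1:ℂ)/2) = ((1/2 : ℝ) : ℂ) by norm_num,
      ← Complex.ofReal_cpow (mul_pos hb hc).le, ← Real.sqrt_eq_rpow, hpdef]
  have hpow2 : ((b:ℂ)/(c:ℂ))^(ν/2 : ℂ) = Complex.exp (ν * L) := by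
    rw [← Complex.ofReal_div,
      Complex.cpow_def_of_ne_zero (Complex.ofReal_ne_zero.2 (div_pos hb hc).ne'),
      ← Complex.ofReal_log (div_pos hb hc).le]
    congr 1
    rw [hLdef, hrdef, Real.log_sqrt (div_pos hb hc).le]
    push_cast
    ring
  rw [step1, step2, hsq, hpow2]
  ring

lemma mul_mem_slit {a b : ℂ} (ha : 0 < a.re) (hb : 0 < b.re) : a * b ∈ Complex.slitPlane := by
  rw [Complex.mem_slitPlane_iff]
  by_contra hcon
  push_neg at hcon
  obtain ⟨h1, h2⟩ := hcon
  have ha0 : a ≠ 0 := fun h => by simp [h] at ha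
  have hab : a * b = (((a*b).re : ℝ) : ℂ) := Complex.ext rfl (by simpa using h2)
  have hb' : b = (((a*b).re : ℝ) : ℂ) * a⁻¹ := by
    rw [← hab, mul_comm a b, mul_assoc, mul_inv_cancel₀ ha0, mul_one]
  have hbre : b.re = (a*b).re * (a.re / Complex.normSq a) := by
    have h5 := congrArg Complex.re hb'
    rw [Complex.re_ofReal_mul, Complex.inv_re] at h5
    exact h5
  have h4 : b.re ≤ 0 := by
    rw [hbre]
    exact mul_nonpos_of_nonpos_of_nonneg h1
      (div_nonneg ha.le (Complex.normSq_nonneg a))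
  linarith

lemma div_mem_slit {a b : ℂ} (ha : 0 < a.re) (hb : 0 < b.re) : a / b ∈ Complex.slitPlane := by
  rw [div_eq_mul_inv]
  apply mul_mem_slit ha
  rw [Complex.inv_re]
  have hb0 : b ≠ 0 := fun h => by simp [h] at hb
  exact div_pos hb (Complex.normSq_pos.2 hb0)

lemma re_sqrt_pos {z : ℂ} (hz : z ∈ Complex.slitPlane) : 0 < (z ^ ((1:ℂ)/2)).re := by
  rw [Complex.cpow_def_of_ne_zero (Complex.slitPlane_ne_zero hz), Complex.exp_re]
  apply mul_pos (Real.exp_pos _)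
  apply Real.cos_pos_of_mem_Ioo
  have him : (Complex.log z * (1/2)).im = z.arg / 2 := by
    simp [Complex.mul_im, Complex.log_im]
    ring
  rw [him]
  have h1 : -π < z.arg := Complex.neg_pi_lt_arg z
  have h2 : z.arg < π :=
    lt_of_le_of_ne (Complex.arg_le_pi z) (Complex.mem_slitPlane_iff_arg.mp hz).1
  constructor <;> [linarith; linarith]

lemma besselK_differentiableAt (ν : ℂ) {x₀ : ℂ} (hx : 0 < x₀.re) :
    DifferentiableAt ℂ (besselK ν) x₀ := by
  set ε : ℝ := x₀.re / 2 with hε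
  have hε0 : 0 < ε := by positivity
  have key := hasDerivAt_integral_of_dominated_loc_of_deriv_le
    (μ := volume.restrict (Ioi 0)) (x₀ := x₀)
    (F := fun x t => Complex.exp (-x * Real.cosh t) * Complex.cosh (ν * t))
    (F' := fun x t => Complex.exp (-x * Real.cosh t) * Complex.cosh (ν * t)
      * (-(Real.cosh t : ℂ)))
    (bound := fun t => Real.cosh t * Real.exp (‖ν‖ * t - ε * Real.cosh t))
    (Metric.ball_mem_nhds _ hε0) ?_ ?_ ?_ ?_ ?_ ?_
  · exact key.2.differentiableAt
  · exact Filter.Eventually.of_forall fun x =>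
      (Continuous.aestronglyMeasurable (by fun_prop))
  · exact intK ν x₀ hx
  · exact Continuous.aestronglyMeasurable (by fun_prop)
  · rw [ae_restrict_iff' measurableSet_Ioi]
    filter_upwards with t ht
    intro x hxball
    have ht' : (0:ℝ) ≤ t := le_of_lt ht
    have hxre : ε ≤ x.re := by
      have h1 : |(x - x₀).re| ≤ ‖x - x₀‖ := Complex.abs_re_le_norm _
      rw [Metric.mem_ball, Complex.dist_eq] at hxball
      have h2 : |x.re - x₀.re| < ε := lt_of_le_of_lt (by simpa using h1) hxball
      have := abs_lt.1 h2
      simp only [hε] at *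
      linarith [this.1]
    have hch : (0:ℝ) < Real.cosh t := Real.cosh_pos t
    rw [norm_mul, norm_mul, norm_neg, Complex.norm_real, Real.norm_eq_abs,
      _root_.abs_of_pos hch]
    have h1 : ‖Complex.exp (-x * Real.cosh t)‖ = Real.exp (-x.re * Real.cosh t) := by
      rw [Complex.norm_exp]
      congr 1
      simp [Complex.mul_re]
    rw [h1, mul_comm _ (Real.cosh t)]
    gcongr
    calc Real.exp (-x.re * Real.cosh t) * ‖Complex.cosh (ν * t)‖
        ≤ Real.exp (-x.re * Real.cosh t) * Real.exp (‖ν‖ * t) :=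
          mul_le_mul_of_nonneg_left (norm_cosh_le ν ht') (Real.exp_pos _).le
      _ ≤ Real.exp (‖ν‖ * t - ε * Real.cosh t) := by
          rw [← Real.exp_add]
          apply Real.exp_le_exp.2
          nlinarith
  · refine (intE (1 + ‖ν‖) (B := ε/2) (by positivity)).mono'
      (Continuous.aestronglyMeasurable (by fun_prop)) ?_
    rw [ae_restrict_iff' measurableSet_Ioi]
    filter_upwards with t ht
    have ht' : (0:ℝ) ≤ t := le_of_lt ht
    have hch : (0:ℝ) < Real.cosh t := Real.cosh_pos t
    have hc1 : Real.cosh t ≤ Real.exp t := by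
      rw [Real.cosh_eq]
      have h := Real.exp_le_exp.2 (neg_le_self ht')
      linarith
    have hc2 : Real.exp t / 2 ≤ Real.cosh t := by
      rw [Real.cosh_eq]
      have := Real.exp_pos (-t)
      linarith
    rw [Real.norm_eq_abs, _root_.abs_of_pos (by positivity)]
    calc Real.cosh t * Real.exp (‖ν‖ * t - ε * Real.cosh t)
        ≤ Real.exp t * Real.exp (‖ν‖ * t - ε/2 * Real.exp t) := by
          apply mul_le_mul hc1 (Real.exp_le_exp.2 (by nlinarith)) (Real.exp_pos _).le
            (Real.exp_pos _).le
      _ = Real.exp ((1 + ‖ν‖) * t - ε/2 * Real.exp t) := by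
          rw [← Real.exp_add]
          congr 1
          ring
  · rw [ae_restrict_iff' measurableSet_Ioi]
    filter_upwards with t _
    intro x _
    have h1 : HasDerivAt (fun x : ℂ => -x * ((Real.cosh t : ℝ) : ℂ))
        (-((Real.cosh t : ℝ) : ℂ)) x := by
      simpa using ((hasDerivAt_id x).neg.mul_const ((Real.cosh t : ℝ) : ℂ))
    have h2 := h1.cexp.mul_const (Complex.cosh (ν * t))
    rw [mul_right_comm] at h2
    exact h2

lemma J_differentiableAt_beta (ν γ : ℂ) (hγ : 0 < γ.re) {β₀ : ℂ} (hβ : 0 < β₀.re) :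
    DifferentiableAt ℂ (fun β => J ν β γ) β₀ := by
  set ε : ℝ := β₀.re / 2 with hε
  have hε0 : 0 < ε := by positivity
  have key := hasDerivAt_integral_of_dominated_loc_of_deriv_le
    (μ := (volume : Measure ℝ)) (x₀ := β₀)
    (F := fun β x => Jf ν β γ x)
    (F' := fun β x => Jf ν β γ x * (-((Real.exp (-x) : ℝ) : ℂ)))
    (bound := fun x => Real.exp ((ν.re - 1) * x - ε * Real.exp (-x) - γ.re * Real.exp x))
    (Metric.ball_mem_nhds _ hε0) ?_ ?_ ?_ ?_ ?_ ?_
  · exact key.2.differentiableAt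
  · exact Filter.Eventually.of_forall fun β =>
      (Continuous.aestronglyMeasurable (by unfold Jf; fun_prop))
  · exact intJf ν β₀ γ hβ hγ
  · exact Continuous.aestronglyMeasurable (by unfold Jf; fun_prop)
  · filter_upwards with x
    intro β hball
    have hβre : ε ≤ β.re := by
      have h1 : |(β - β₀).re| ≤ ‖β - β₀‖ := Complex.abs_re_le_norm _
      rw [Metric.mem_ball, Complex.dist_eq] at hball
      have h2 : |β.re - β₀.re| < ε := lt_of_le_of_lt (by simpa using h1) hball
      have := abs_lt.1 h2
      simp only [hε] at *
      linarith [this.1]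
    rw [norm_mul, norm_Jf, norm_neg, Complex.norm_real, Real.norm_eq_abs,
      _root_.abs_of_pos (Real.exp_pos _), ← Real.exp_add]
    apply Real.exp_le_exp.2
    have := Real.exp_pos (-x)
    nlinarith
  · exact intW (ν.re - 1) hε0 hγ
  · filter_upwards with x
    intro β _
    have h1 : HasDerivAt (fun β : ℂ => ν * (x:ℂ) - β * ((Real.exp (-x) : ℝ) : ℂ)
        - γ * ((Real.exp x : ℝ) : ℂ)) (-((Real.exp (-x) : ℝ) : ℂ)) β := by
      simpa using (((hasDerivAt_id β).mul_const ((Real.exp (-x) : ℝ) : ℂ)).const_sub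
        (ν * (x:ℂ))).sub_const (γ * ((Real.exp x : ℝ) : ℂ))
    exact h1.cexp

lemma J_differentiableAt_gamma (ν β : ℂ) (hβ : 0 < β.re) {γ₀ : ℂ} (hγ : 0 < γ₀.re) :
    DifferentiableAt ℂ (fun γ => J ν β γ) γ₀ := by
  set ε : ℝ := γ₀.re / 2 with hε
  have hε0 : 0 < ε := by positivity
  have key := hasDerivAt_integral_of_dominated_loc_of_deriv_le
    (μ := (volume : Measure ℝ)) (x₀ := γ₀)
    (F := fun γ x => Jf ν β γ x)
    (F' := fun γ x => Jf ν β γ x * (-((Real.exp x : ℝ) : ℂ)))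
    (bound := fun x => Real.exp ((ν.re + 1) * x - β.re * Real.exp (-x) - ε * Real.exp x))
    (Metric.ball_mem_nhds _ hε0) ?_ ?_ ?_ ?_ ?_ ?_
  · exact key.2.differentiableAt
  · exact Filter.Eventually.of_forall fun γ =>
      (Continuous.aestronglyMeasurable (by unfold Jf; fun_prop))
  · exact intJf ν β γ₀ hβ hγ
  · exact Continuous.aestronglyMeasurable (by unfold Jf; fun_prop)
  · filter_upwards with x
    intro γ hball
    have hγre : ε ≤ γ.re := by
      have h1 : |(γ - γ₀).re| ≤ ‖γ - γ₀‖ := Complex.abs_re_le_norm _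
      rw [Metric.mem_ball, Complex.dist_eq] at hball
      have h2 : |γ.re - γ₀.re| < ε := lt_of_le_of_lt (by simpa using h1) hball
      have := abs_lt.1 h2
      simp only [hε] at *
      linarith [this.1]
    rw [norm_mul, norm_Jf, norm_neg, Complex.norm_real, Real.norm_eq_abs,
      _root_.abs_of_pos (Real.exp_pos _), ← Real.exp_add]
    apply Real.exp_le_exp.2
    have := Real.exp_pos x
    nlinarith
  · exact intW (ν.re + 1) hβ hε0
  · filter_upwards with x
    intro γ _
    have h1 : HasDerivAt (fun γ : ℂ => ν * (x:ℂ) - β * ((Real.exp (-x) : ℝ) : ℂ)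
        - γ * ((Real.exp x : ℝ) : ℂ)) (-((Real.exp x : ℝ) : ℂ)) γ := by
      simpa using ((hasDerivAt_id γ).mul_const ((Real.exp x : ℝ) : ℂ)).const_sub
        (ν * (x:ℂ) - β * ((Real.exp (-x) : ℝ) : ℂ))
    exact h1.cexp

noncomputable def RHS (ν β γ : ℂ) : ℂ :=
  2 * (β/γ)^(ν/2 : ℂ) * besselK ν (2 * (β*γ)^((1:ℂ)/2))

lemma rhs_differentiableAt_beta (ν γ : ℂ) (hγ : 0 < γ.re) {β₀ : ℂ} (hβ : 0 < β₀.re) :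
    DifferentiableAt ℂ (fun β => RHS ν β γ) β₀ := by
  unfold RHS
  have h1 : DifferentiableAt ℂ (fun β : ℂ => (β/γ)^(ν/2 : ℂ)) β₀ :=
    (differentiableAt_id.div_const γ).cpow (differentiableAt_const _) (div_mem_slit hβ hγ)
  have h2 : DifferentiableAt ℂ (fun β : ℂ => 2 * (β*γ)^((1:ℂ)/2)) β₀ :=
    ((differentiableAt_id.mul_const γ).cpow (differentiableAt_const _)
      (mul_mem_slit hβ hγ)).const_mul 2
  have hre : 0 < (2 * (β₀*γ)^((1:ℂ)/2)).re := by
    have := re_sqrt_pos (mul_mem_slit hβ hγ)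
    simp only [Complex.mul_re]
    norm_num
    linarith
  have h3 : DifferentiableAt ℂ (fun β : ℂ => besselK ν (2 * (β*γ)^((1:ℂ)/2))) β₀ :=
    by have := (besselK_differentiableAt ν hre).comp β₀ h2; exact this
  exact ((differentiableAt_const (2:ℂ)).mul h1).mul h3

lemma rhs_differentiableAt_gamma (ν β : ℂ) (hβ : 0 < β.re) {γ₀ : ℂ} (hγ : 0 < γ₀.re) :
    DifferentiableAt ℂ (fun γ => RHS ν β γ) γ₀ := by
  unfold RHS
  have hγ0 : γ₀ ≠ 0 := fun h => by simp [h] at hγ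
  have h1 : DifferentiableAt ℂ (fun γ : ℂ => (β/γ)^(ν/2 : ℂ)) γ₀ :=
    ((differentiableAt_const β).div differentiableAt_id hγ0).cpow
      (differentiableAt_const _) (div_mem_slit hβ hγ)
  have h2 : DifferentiableAt ℂ (fun γ : ℂ => 2 * (β*γ)^((1:ℂ)/2)) γ₀ :=
    (((differentiableAt_const β).mul differentiableAt_id).cpow (differentiableAt_const _)
      (mul_mem_slit hβ hγ)).const_mul 2
  have hre : 0 < (2 * (β*γ₀)^((1:ℂ)/2)).re := by
    have := re_sqrt_pos (mul_mem_slit hβ hγ)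
    simp only [Complex.mul_re]
    norm_num
    linarith
  have h3 : DifferentiableAt ℂ (fun γ : ℂ => besselK ν (2 * (β*γ)^((1:ℂ)/2))) γ₀ :=
    by have := (besselK_differentiableAt ν hre).comp γ₀ h2; exact this
  exact ((differentiableAt_const (2:ℂ)).mul h1).mul h3

/-- Identity theorem machinery: two functions analytic on the right half-plane agreeing
on real points agree everywhere. -/
lemma halfplane_ext {f g : ℂ → ℂ}
    (hf : ∀ z : ℂ, 0 < z.re → DifferentiableAt ℂ f z)
    (hg : ∀ z : ℂ, 0 < z.re → DifferentiableAt ℂ g z)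
    (h : ∀ x : ℝ, 0 < x → f x = g x) {z : ℂ} (hz : 0 < z.re) : f z = g z := by
  set U : Set ℂ := {w : ℂ | 0 < w.re} with hU
  have hUopen : IsOpen U := isOpen_lt continuous_const Complex.continuous_re
  have hUpre : IsPreconnected U := (convex_halfSpace_re_gt 0).isPreconnected
  have hfd : DifferentiableOn ℂ f U := fun w hw => (hf w hw).differentiableWithinAt
  have hgd : DifferentiableOn ℂ g U := fun w hw => (hg w hw).differentiableWithinAt
  have hfa : AnalyticOnNhd ℂ f U := hfd.analyticOnNhd hUopen
  have hga : AnalyticOnNhd ℂ g U := hgd.analyticOnNhd hUopen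
  have h1U : (1:ℂ) ∈ U := by simp [hU]
  have hfreq : ∃ᶠ w in nhdsWithin (1:ℂ) {(1:ℂ)}ᶜ, f w = g w := by
    set u : ℕ → ℂ := fun n => (((1 + ((n:ℝ)+1)⁻¹ : ℝ)) : ℂ) with hu
    have htend0 : Tendsto (fun n : ℕ => ((n:ℝ)+1)⁻¹) atTop (nhds 0) := by
      simpa [one_div] using tendsto_one_div_add_atTop_nhds_zero_nat (𝕜 := ℝ)
    have htend : Tendsto u atTop (nhds (1:ℂ)) := by
      have : Tendsto (fun n : ℕ => (1 + ((n:ℝ)+1)⁻¹ : ℝ)) atTop (nhds 1) := by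
        simpa using tendsto_const_nhds.add htend0
      have := (Complex.continuous_ofReal.tendsto 1).comp this
      simpa [hu, Function.comp_def] using this
    have hne : ∀ n, u n ∈ ({(1:ℂ)}ᶜ : Set ℂ) := by
      intro n
      simp only [hu, mem_compl_iff, mem_singleton_iff]
      intro hcon
      have : (1 + ((n:ℝ)+1)⁻¹ : ℝ) = 1 := by exact_mod_cast hcon
      have hpos : (0:ℝ) < ((n:ℝ)+1)⁻¹ := by positivity
      linarith
    have htend' : Tendsto u atTop (nhdsWithin (1:ℂ) {(1:ℂ)}ᶜ) :=
      tendsto_nhdsWithin_of_tendsto_nhds_of_eventually_within u htend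
        (Filter.Eventually.of_forall hne)
    apply htend'.frequently
    apply Filter.Frequently.of_forall
    intro n
    exact h (1 + ((n:ℝ)+1)⁻¹) (by positivity)
  exact hfa.eqOn_of_preconnected_of_frequently_eq hga hUpre h1U hfreq hz

lemma J_eq_RHS (ν β γ : ℂ) (hβ : 0 < β.re) (hγ : 0 < γ.re) : J ν β γ = RHS ν β γ := by
  have stepA : ∀ c : ℝ, 0 < c → ∀ b : ℂ, 0 < b.re → J ν b (c:ℂ) = RHS ν b (c:ℂ) := by
    intro c hc b hb
    refine halfplane_ext (f := fun b => J ν b (c:ℂ)) (g := fun b => RHS ν b (c:ℂ))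
      (fun z hz => J_differentiableAt_beta ν (c:ℂ) (by simpa using hc) hz)
      (fun z hz => rhs_differentiableAt_beta ν (c:ℂ) (by simpa using hc) hz)
      (fun x hx => ?_) hb
    exact real_case ν hx hc
  exact halfplane_ext (f := fun g => J ν β g) (g := fun g => RHS ν β g)
    (fun z hz => J_differentiableAt_gamma ν β hβ hz)
    (fun z hz => rhs_differentiableAt_gamma ν β hβ hz)
    (fun x hx => stepA x hx β hβ) hγ

end BesselAux

/-- For `Re(β) > 0`, `Re(γ) > 0`,
`∫₀^∞ y^{ν−1} e^{−β/y − γy} dy = 2 (β/γ)^{ν/2} K_ν(2√(βγ))`. -/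
theorem besselK_mellin_type (ν β γ : ℂ) (hβ : 0 < β.re) (hγ : 0 < γ.re) :
    ∫ y in Ioi (0:ℝ), (y:ℂ)^(ν-1) * Complex.exp (-β/(y:ℂ) - γ*(y:ℂ))
      = 2 * (β/γ)^(ν/2 : ℂ) * besselK ν (2 * (β*γ)^((1:ℂ)/2)) := by
  rw [BesselAux.lhs_eq_J]
  exact BesselAux.J_eq_RHS ν β γ hβ hγ
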